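/- Let F be a field and let M be an n×n matrix over F with all diagonal entries nonzero. If n ≥ R(s, rank(M)+1), where R denotes the Ramsey number, then there exists a set C ⊆ [n] of size s such that for every i, i' ∈ C, at least one of M_{i,i'} and M_{i',i} is nonzero. -/

import Mathlib

/-- `n` has the Ramsey property for `(s, t)`: every graph on `n` vertices contains a
clique of size `s` or an independent set of size `t`. -/
def RamseyProp (n s t : ℕ) : Prop :=
  ∀ G : SimpleGraph (Fin n),
    (∃ K : Finset (Fin n), G.IsNClique s K) ∨
    (∃ I : Finset (Fin n), I.card = t ∧ ∀ i ∈ I, ∀ j ∈ I, ¬ G.Adj i j)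

/-- The Ramsey number `R(s, t)`. -/
noncomputable def ramsey (s t : ℕ) : ℕ := sInf {n | RamseyProp n s t}

lemma ramseyProp_mono {m n s t : ℕ} (h : m ≤ n) (hm : RamseyProp m s t) :
    RamseyProp n s t := by
  intro G
  obtain hc | hi := hm (G.comap (Fin.castLE h))
  · obtain ⟨K, hK⟩ := hc
    refine Or.inl ⟨K.map ⟨Fin.castLE h, Fin.castLE_injective h⟩, ?_, by
      rw [Finset.card_map]; exact hK.2⟩
    rintro x hx y hy hxy
    simp only [Finset.coe_map, Set.mem_image, Finset.mem_coe,
      Function.Embedding.coeFn_mk] at hx hy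
    obtain ⟨a, ha, rfl⟩ := hx
    obtain ⟨b, hb, rfl⟩ := hy
    exact hK.1 ha hb (fun hab => hxy (by rw [hab]))
  · obtain ⟨I, hIc, hI⟩ := hi
    refine Or.inr ⟨I.map ⟨Fin.castLE h, Fin.castLE_injective h⟩, by simp [hIc], ?_⟩
    intro i hi' j hj'
    simp only [Finset.mem_map, Function.Embedding.coeFn_mk] at hi' hj'
    obtain ⟨a, ha, rfl⟩ := hi'
    obtain ⟨b, hb, rfl⟩ := hj'
    exact hI a ha b hb

lemma ramseyProp_subset {n s t : ℕ} (G : SimpleGraph (Fin n)) (A : Finset (Fin n))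
    (h : RamseyProp A.card s t) :
    (∃ K : Finset (Fin n), ↑K ⊆ (A : Set (Fin n)) ∧ G.IsNClique s K) ∨
    (∃ I : Finset (Fin n), ↑I ⊆ (A : Set (Fin n)) ∧ I.card = t ∧
      ∀ i ∈ I, ∀ j ∈ I, ¬ G.Adj i j) := by
  classical
  set e := A.orderIsoOfFin rfl with he
  let f : Fin A.card ↪ Fin n :=
    ⟨fun i => (e i : Fin n), fun i j hij => e.injective (Subtype.ext hij)⟩
  obtain hc | hi := h (G.comap f)
  · obtain ⟨K, hK⟩ := hc
    refine Or.inl ⟨K.map f, ?_, ?_, by rw [Finset.card_map]; exact hK.2⟩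
    · rintro x hx
      simp only [Finset.coe_map, Set.mem_image, Finset.mem_coe] at hx
      obtain ⟨a, _, rfl⟩ := hx
      exact (e a).2
    · rintro x hx y hy hxy
      simp only [Finset.coe_map, Set.mem_image, Finset.mem_coe,
        Function.Embedding.coeFn_mk] at hx hy
      obtain ⟨a, ha, rfl⟩ := hx
      obtain ⟨b, hb, rfl⟩ := hy
      exact hK.1 ha hb (fun hab => hxy (by rw [hab]))
  · obtain ⟨I, hIc, hI⟩ := hi
    refine Or.inr ⟨I.map f, ?_, by simp [hIc], ?_⟩
    · rintro x hx
      simp only [Finset.coe_map, Set.mem_image, Finset.mem_coe] at hx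
      obtain ⟨a, _, rfl⟩ := hx
      exact (e a).2
    · intro i hi' j hj'
      simp only [Finset.mem_map, Function.Embedding.coeFn_mk] at hi' hj'
      obtain ⟨a, ha, rfl⟩ := hi'
      obtain ⟨b, hb, rfl⟩ := hj'
      exact hI a ha b hb

lemma ramseyProp_exists (s : ℕ) : ∀ t : ℕ, ∃ N, ∀ n, N ≤ n → RamseyProp n s t := by
  induction s with
  | zero =>
    exact fun t => ⟨0, fun n _ G => Or.inl ⟨∅, SimpleGraph.isNClique_empty.2 rfl⟩⟩
  | succ s ihs =>
    intro t
    induction t with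
    | zero => exact ⟨0, fun n _ G => Or.inr ⟨∅, rfl, by simp⟩⟩
    | succ t iht =>
      obtain ⟨Na, hNa⟩ := ihs (t + 1)
      obtain ⟨Nb, hNb⟩ := iht
      refine ⟨Na + Nb + 1, fun n hn G => ?_⟩
      classical
      have hn1 : 0 < n := lt_of_lt_of_le (Nat.succ_pos _) hn
      set v : Fin n := ⟨0, hn1⟩ with hv
      set A : Finset (Fin n) := Finset.univ.filter fun u => G.Adj v u with hA
      have hvA : v ∉ A := by simp [hA]
      set B : Finset (Fin n) := (insert v A)ᶜ with hB
      have hcard : A.card + B.card + 1 = n := by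
        have h1 : (insert v A).card = A.card + 1 := Finset.card_insert_of_notMem hvA
        have h2 : B.card = n - (A.card + 1) := by
          rw [hB, Finset.card_compl, h1, Fintype.card_fin]
        have h3 : (insert v A).card ≤ n := by
          simpa using Finset.card_le_card (Finset.subset_univ (insert v A))
        omega
      have hab : Na ≤ A.card ∨ Nb ≤ B.card := by omega
      obtain hA' | hB' := hab
      · obtain hc | hi := ramseyProp_subset G A (hNa A.card hA')
        · obtain ⟨K, hKA, hK⟩ := hc
          have hadj : ∀ b ∈ K, G.Adj v b := by
            intro b hb
            have : b ∈ A := hKA hb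
            simpa [hA] using this
          have hvK : v ∉ K := fun hmem => G.irrefl (hadj v hmem)
          exact Or.inl ⟨insert v K, hK.insert hadj⟩
        · obtain ⟨I, _, hIc, hI⟩ := hi
          exact Or.inr ⟨I, hIc, hI⟩
      · obtain hc | hi := ramseyProp_subset G B (hNb B.card hB')
        · obtain ⟨K, _, hK⟩ := hc
          exact Or.inl ⟨K, hK⟩
        · obtain ⟨I, hIB, hIc, hI⟩ := hi
          have hBmem : ∀ u ∈ I, ¬ G.Adj v u ∧ u ≠ v := by
            intro u hu
            have : u ∈ B := hIB hu
            rw [hB] at this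
            simp only [Finset.mem_compl, Finset.mem_insert, hA, Finset.mem_filter,
              Finset.mem_univ, true_and, not_or] at this
            exact ⟨this.2, this.1⟩
          have hvI : v ∉ I := fun hmem => (hBmem v hmem).2 rfl
          refine Or.inr ⟨insert v I, ?_, ?_⟩
          · rw [Finset.card_insert_of_notMem hvI, hIc]
          · intro i hi' j hj'
            rcases Finset.mem_insert.1 hi' with rfl | hi'' <;>
              rcases Finset.mem_insert.1 hj' with rfl | hj''
            · exact G.irrefl
            · exact (hBmem j hj'').1
            · exact fun hadj => (hBmem i hi'').1 hadj.symm
            · exact hI i hi'' j hj''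

lemma ramsey_le_imp {s t n : ℕ} (h : ramsey s t ≤ n) : RamseyProp n s t := by
  obtain ⟨N, hN⟩ := ramseyProp_exists s t
  have hne : {k | RamseyProp k s t}.Nonempty := ⟨N, hN N le_rfl⟩
  exact ramseyProp_mono h (Nat.sInf_mem hne)

lemma rank_submatrix_le'' {F : Type} [Field F] {n : ℕ} {m : Type} [Fintype m]
    [DecidableEq m] (f g : m → Fin n) (A : Matrix (Fin n) (Fin n) F) :
    (A.submatrix f g).rank ≤ A.rank := by
  classical
  have h : A.submatrix f g =
      (Matrix.of fun i k => if f i = k then (1 : F) else 0) * A *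
      (Matrix.of fun l j => if g j = l then (1 : F) else 0) := by
    ext i j
    simp [Matrix.mul_apply, ite_mul, mul_ite, Finset.sum_ite_eq, Finset.sum_ite_eq']
  rw [h]
  exact (Matrix.rank_mul_le_left _ _).trans (Matrix.rank_mul_le_right _ _)

/-- if `M` is an `n × n` matrix over a field with nonzero diagonal and
`n ≥ R(s, rank M + 1)`, there is a set `C` of `s` indices such that for all
`i, i' ∈ C`, `M i i' ≠ 0` or `M i' i ≠ 0`. -/
theorem exists_nonzero_pattern_clique {F : Type} [Field F] {n s : ℕ}
    (M : Matrix (Fin n) (Fin n) F) (hdiag : ∀ i, M i i ≠ 0)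
    (hn : ramsey s (M.rank + 1) ≤ n) :
    ∃ C : Finset (Fin n), C.card = s ∧
      ∀ i ∈ C, ∀ i' ∈ C, M i i' ≠ 0 ∨ M i' i ≠ 0 := by
  classical
  let G : SimpleGraph (Fin n) :=
    { Adj := fun i j => i ≠ j ∧ (M i j ≠ 0 ∨ M j i ≠ 0)
      symm := ⟨fun i j h => ⟨h.1.symm, h.2.symm⟩⟩
      loopless := ⟨fun i h => h.1 rfl⟩ }
  obtain hc | hi := ramsey_le_imp hn G
  · obtain ⟨K, hK⟩ := hc
    refine ⟨K, hK.2, fun i hi i' hi' => ?_⟩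
    by_cases h : i = i'
    · subst h; exact Or.inl (hdiag i)
    · exact (hK.1 hi hi' h).2
  · exfalso
    obtain ⟨I, hIc, hI⟩ := hi
    set N : Matrix {x // x ∈ I} {x // x ∈ I} F :=
      M.submatrix (fun i => (i : Fin n)) (fun i => (i : Fin n)) with hN
    have hNd : N = Matrix.diagonal fun i : {x // x ∈ I} => M i i := by
      ext ⟨a, ha⟩ ⟨b, hb⟩
      by_cases hab : a = b
      · subst hab; simp [hN, Matrix.submatrix_apply]
      · have hne : (⟨a, ha⟩ : {x // x ∈ I}) ≠ ⟨b, hb⟩ := fun h => hab (congrArg Subtype.val h)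
        rw [Matrix.diagonal_apply_ne _ hne]
        have := hI a ha b hb
        simp only [G, not_and, not_or, not_not] at this
        exact (this hab).1
    have h1 : N.rank = I.card := by
      rw [hNd, Matrix.rank_diagonal]
      have e : {i : {x // x ∈ I} // M ↑i ↑i ≠ 0} ≃ {x // x ∈ I} :=
        Equiv.subtypeUnivEquiv (fun i => hdiag (i : Fin n))
      exact (Fintype.card_congr e).trans (Fintype.card_coe I)
    have h2 : N.rank ≤ M.rank := rank_submatrix_le'' _ _ M
    rw [h1, hIc] at h2
    omega
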